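/- Let R be a commutative ring, let b, c ∈ R, and let S be a subset of R. Let I be the ideal of R[X] generated by X² + bX + c together with all elements s·X for s ∈ S. Then the R-linear map R × R → R[X]/I sending (u, v) to the class of the polynomial u + v·X is surjective, and its kernel is J₁ × J₂, where J₁ is the ideal of R generated by {s·c : s ∈ S} and J₂ is the ideal of R generated by S. Consequently R[X]/I is isomorphic as an R-module to (R/J₁) × (R/J₂). -/

import Mathlib

open Polynomial

/-- The `R`-linear map `R × R → R[X]/I` sending `(u, v)` to the class of `u + v·X`. -/
noncomputable def constLinearPair {R : Type*} [CommRing R] (I : Ideal R[X]) :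
    R × R →ₗ[R] R[X] ⧸ I :=
  (Ideal.Quotient.mkₐ R I).toLinearMap.comp
    ((Algebra.linearMap R R[X]).coprod (LinearMap.toSpanSingleton R R[X] X))

/-- Let `R` be a commutative ring, `b c : R`, `S ⊆ R`. Let `I` be the ideal of
`R[X]` generated by `X² + bX + c` together with all `s·X` for `s ∈ S`. Then the `R`-linear map
`R × R → R[X]/I`, `(u, v) ↦ [u + v·X]`, is surjective, its kernel is `J₁ × J₂` where
`J₁ = (s·c : s ∈ S)` and `J₂ = (S)` are ideals of `R`, and consequently `R[X]/I ≅ (R/J₁) × (R/J₂)`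
as `R`-modules. -/
theorem quotient_module_structure {R : Type*} [CommRing R] (b c : R) (S : Set R)
    (I : Ideal R[X]) (hI : I = Ideal.span ({X ^ 2 + C b * X + C c} ∪ (fun s : R => C s * X) '' S))
    (J₁ : Ideal R) (hJ₁ : J₁ = Ideal.span ((fun s : R => s * c) '' S))
    (J₂ : Ideal R) (hJ₂ : J₂ = Ideal.span S) :
    (∀ u v : R, constLinearPair I (u, v) = Ideal.Quotient.mk I (C u + C v * X)) ∧
      Function.Surjective (constLinearPair I) ∧
      LinearMap.ker (constLinearPair I) = Submodule.prod J₁ J₂ ∧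
      Nonempty (((R ⧸ J₁) × (R ⧸ J₂)) ≃ₗ[R] (R[X] ⧸ I)) := by
  -- Part 1: the formula for the map.
  have happly : ∀ u v : R, constLinearPair I (u, v) = Ideal.Quotient.mk I (C u + C v * X) := by
    intro u v
    simp [constLinearPair, Polynomial.smul_eq_C_mul, algebraMap_eq]
  -- the quadratic polynomial
  set f : R[X] := X ^ 2 + C b * X + C c with hf
  have hf2 : f = X ^ 2 + (C b * X + C c) := by rw [hf]; ring
  rcases subsingleton_or_nontrivial R with hR | hR
  · -- trivial ring: everything degenerate
    haveI : Subsingleton R[X] := inferInstance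
    haveI : Subsingleton (R[X] ⧸ I) := Quotient.instSubsingletonQuotient _
    haveI : Subsingleton (R ⧸ J₁) := Quotient.instSubsingletonQuotient _
    haveI : Subsingleton (R ⧸ J₂) := Quotient.instSubsingletonQuotient _
    refine ⟨happly, fun x => ⟨0, Subsingleton.elim _ _⟩, ?_, ⟨LinearEquiv.ofSubsingleton _ _⟩⟩
    ext ⟨u, v⟩
    simp only [LinearMap.mem_ker, Submodule.mem_prod]
    constructor
    · intro _
      exact ⟨(Subsingleton.elim (0 : R) u) ▸ J₁.zero_mem,
        (Subsingleton.elim (0 : R) v) ▸ J₂.zero_mem⟩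
    · intro _
      exact Subsingleton.elim _ _
  -- nontrivial ring
  have hdeglin : ∀ u v : R, degree (C u * X + C v) < (2 : ℕ) := by
    intro u v
    refine lt_of_le_of_lt degree_linear_le ?_
    exact_mod_cast Nat.one_lt_two
  have hmonic : f.Monic := by
    rw [hf2]
    exact monic_X_pow_add (hdeglin b c)
  have hdegf : degree f = (2 : ℕ) := by
    rw [hf2]
    rw [degree_add_eq_left_of_degree_lt, degree_X_pow]
    rw [degree_X_pow]
    exact hdeglin b c
  -- generators are in I
  have hfI : f ∈ I := by
    rw [hI]; exact Ideal.subset_span (Set.mem_union_left _ rfl)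
  have hsXI : ∀ s ∈ S, C s * X ∈ I := by
    intro s hs
    rw [hI]; exact Ideal.subset_span (Set.mem_union_right _ ⟨s, hs, rfl⟩)
  -- J₁ ⊆ constants in I
  have hJ1I : ∀ u ∈ J₁, C u ∈ I := by
    intro u hu
    rw [hJ₁] at hu
    induction hu using Submodule.span_induction with
    | mem x hx =>
      obtain ⟨s, hs, rfl⟩ := hx
      have : C (s * c) = C s * f - C s * X * X - C b * (C s * X) := by
        rw [map_mul, hf]; ring
      rw [this]
      exact I.sub_mem (I.sub_mem (I.mul_mem_left _ hfI) (I.mul_mem_right _ (hsXI s hs)))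
        (I.mul_mem_left _ (hsXI s hs))
    | zero => simp
    | add x y _ _ hx hy => rw [map_add]; exact I.add_mem hx hy
    | smul r x _ hx =>
      rw [smul_eq_mul, map_mul]
      exact I.mul_mem_left _ hx
  -- J₂ ⊆ coefficients of X in I
  have hJ2I : ∀ v ∈ J₂, C v * X ∈ I := by
    intro v hv
    rw [hJ₂] at hv
    induction hv using Submodule.span_induction with
    | mem x hx => exact hsXI x hx
    | zero => simp
    | add x y _ _ hx hy =>
      rw [map_add, add_mul]; exact I.add_mem hx hy
    | smul r x _ hx =>
      rw [smul_eq_mul, map_mul, mul_assoc]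
      exact I.mul_mem_left _ hx
  -- J₂ · c ⊆ J₁
  have hJ2c : ∀ v ∈ J₂, v * c ∈ J₁ := by
    intro v hv
    rw [hJ₂] at hv
    induction hv using Submodule.span_induction with
    | mem x hx => exact hJ₁ ▸ Ideal.subset_span ⟨x, hx, rfl⟩
    | zero => simp
    | add x y _ _ hx hy => rw [add_mul]; exact J₁.add_mem hx hy
    | smul r x _ hx => rw [smul_eq_mul, mul_assoc]; exact J₁.mul_mem_left _ hx
  -- constant coefficient of (a*X) %ₘ f is a multiple of c
  have hfc0 : f.coeff 0 = c := by
    simp [hf, coeff_X_pow]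
  have hax : ∀ a : R[X], ((a * X) %ₘ f).coeff 0 = -(c * ((a * X) /ₘ f).coeff 0) := by
    intro a
    have h := modByMonic_add_div (a * X) f
    have h0 := congrArg (fun p : R[X] => p.coeff 0) h
    simp only [coeff_add, mul_coeff_zero, coeff_X_zero, mul_zero, hfc0] at h0
    linear_combination h0
  -- key lemma: coefficients of remainders of elements of I lie in J₁, J₂
  have key : ∀ p ∈ I, (p %ₘ f).coeff 0 ∈ J₁ ∧ (p %ₘ f).coeff 1 ∈ J₂ := by
    have main : ∀ p ∈ I, ∀ a : R[X],
        ((a * p) %ₘ f).coeff 0 ∈ J₁ ∧ ((a * p) %ₘ f).coeff 1 ∈ J₂ := by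
      intro p hp
      rw [hI] at hp
      induction hp using Submodule.span_induction with
      | mem x hx =>
        intro a
        rcases hx with hx | ⟨s, hs, rfl⟩
        · rw [Set.mem_singleton_iff] at hx
          subst hx
          rw [mul_self_modByMonic hmonic]
          simp
        · have heq : a * (C s * X) = s • (a * X) := by
            rw [Polynomial.smul_eq_C_mul]; ring
          rw [heq, smul_modByMonic]
          have hsJ₂ : s ∈ J₂ := hJ₂ ▸ Ideal.subset_span hs
          constructor
          · rw [coeff_smul, smul_eq_mul, hax a]
            have : s * -(c * ((a * X) /ₘ f).coeff 0) = ((a * X) /ₘ f).coeff 0 * (s * c) * (-1) := by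
              ring
            rw [this]
            exact J₁.mul_mem_right _ (J₁.mul_mem_left _ (hJ₁ ▸ Ideal.subset_span ⟨s, hs, rfl⟩))
          · rw [coeff_smul, smul_eq_mul]
            exact J₂.mul_mem_right _ hsJ₂
      | zero => intro a; simp
      | add x y _ _ hx hy =>
        intro a
        rw [mul_add, add_modByMonic, coeff_add, coeff_add]
        exact ⟨J₁.add_mem (hx a).1 (hy a).1, J₂.add_mem (hx a).2 (hy a).2⟩
      | smul r x _ hx =>
        intro a
        have : a * (r • x) = (a * r) * x := by rw [smul_eq_mul]; ring
        rw [this]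
        exact hx (a * r)
    intro p hp
    have := main p hp 1
    rwa [one_mul] at this
  -- kernel
  have hker : LinearMap.ker (constLinearPair I) = Submodule.prod J₁ J₂ := by
    ext ⟨u, v⟩
    rw [LinearMap.mem_ker, happly, Ideal.Quotient.eq_zero_iff_mem, Submodule.mem_prod]
    constructor
    · intro h
      have hself : (C u + C v * X) %ₘ f = C u + C v * X := by
        rw [modByMonic_eq_self_iff hmonic, hdegf]
        have : C u + C v * X = C v * X + C u := by ring
        rw [this]
        exact hdeglin v u
      have := key _ h
      rw [hself] at this
      simpa using this
    · rintro ⟨h1, h2⟩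
      exact I.add_mem (hJ1I u h1) (hJ2I v h2)
  -- surjectivity
  have hsurj : Function.Surjective (constLinearPair I) := by
    intro z
    obtain ⟨p, rfl⟩ := Ideal.Quotient.mk_surjective z
    refine ⟨((p %ₘ f).coeff 0, (p %ₘ f).coeff 1), ?_⟩
    rw [happly]
    have hdeg : degree (p %ₘ f) ≤ 1 := by
      have := degree_modByMonic_lt p hmonic
      rw [hdegf] at this
      exact Order.le_of_lt_succ (by exact_mod_cast this)
    have hrep : C ((p %ₘ f).coeff 0) + C ((p %ₘ f).coeff 1) * X = p %ₘ f := by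
      conv_rhs => rw [eq_X_add_C_of_degree_le_one hdeg]
      ring
    rw [hrep]
    rw [Ideal.Quotient.mk_eq_mk_iff_sub_mem]
    have : p %ₘ f - p = -(f * (p /ₘ f)) := by
      have := modByMonic_add_div p f
      linear_combination this
    rw [this]
    exact I.neg_mem (I.mul_mem_right _ hfI)
  refine ⟨happly, hsurj, hker, ?_⟩
  -- the isomorphism
  let q : (R × R) →ₗ[R] (R ⧸ J₁) × (R ⧸ J₂) := (J₁.mkQ).prodMap (J₂.mkQ)
  have hqsurj : Function.Surjective q := by
    rintro ⟨x, y⟩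
    obtain ⟨x', rfl⟩ := Submodule.mkQ_surjective J₁ x
    obtain ⟨y', rfl⟩ := Submodule.mkQ_surjective J₂ y
    exact ⟨(x', y'), rfl⟩
  have hkerq : LinearMap.ker q = Submodule.prod J₁ J₂ := by
    rw [LinearMap.ker_prodMap, Submodule.ker_mkQ, Submodule.ker_mkQ]
  exact ⟨((q.quotKerEquivOfSurjective hqsurj).symm.trans
    (Submodule.quotEquivOfEq _ _ (hkerq.trans hker.symm))).trans
    ((constLinearPair I).quotKerEquivOfSurjective hsurj)⟩
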